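/- Let (Z(t)) be an irreducible random walk on ℤ^d with step distribution μ, killed upon leaving the half-space ℤ^{d-1}×ℕ*. Then the killed process satisfies the communication condition within the half-space: there exist θ > 0, C > 0 such that for any z ≠ z' in ℤ^{d-1}×ℕ* there is a path z = z₀, z₁, …, z_n = z' staying in ℤ^{d-1}×ℕ*, with n ≤ C·|z'−z|, |z_i − z_{i-1}| ≤ C, and μ(z_i − z_{i-1}) ≥ θ for each i. The path can be chosen so that first all steps with nonnegative last coordinate are taken, then the rest. -/

import Mathlib

open scoped BigOperators

section Aux

variable {α : Type*}

/-- repeat `lp` `c` times if `c ≥ 0`, else `ln` `(-c)` times -/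
def repList (c : ℤ) (lp ln : List α) : List α :=
  if 0 ≤ c then (List.replicate c.toNat lp).flatten
  else (List.replicate (-c).toNat ln).flatten

lemma repList_sum [AddCommGroup α] {v : α} (c : ℤ) {lp ln : List α}
    (hp : lp.sum = v) (hn : ln.sum = -v) : (repList c lp ln).sum = c • v := by
  unfold repList
  split_ifs with h
  · rw [List.sum_flatten, List.map_replicate, List.sum_replicate, hp]
    calc c.toNat • v = ((c.toNat : ℤ)) • v := (natCast_zsmul v c.toNat).symm
      _ = c • v := by rw [Int.toNat_of_nonneg h]
  · rw [List.sum_flatten, List.map_replicate, List.sum_replicate, hn, smul_neg]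
    calc -((-c).toNat • v) = -(((-c).toNat : ℤ) • v) := by rw [natCast_zsmul]
      _ = c • v := by rw [Int.toNat_of_nonneg (by omega : (0:ℤ) ≤ -c), neg_smul, neg_neg]

lemma repList_mem {c : ℤ} {lp ln : List α} {x : α} (hx : x ∈ repList c lp ln) :
    x ∈ lp ∨ x ∈ ln := by
  unfold repList at hx
  split_ifs at hx with h <;>
  · obtain ⟨l, hl, hxl⟩ := List.mem_flatten.1 hx
    rw [List.mem_replicate] at hl
    simp [hl.2] at hxl ⊢
    tauto

lemma repList_length {c : ℤ} {lp ln : List α} {M : ℕ}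
    (hp : lp.length ≤ M) (hn : ln.length ≤ M) :
    ((repList c lp ln).length : ℝ) ≤ ‖c‖ * M := by
  have habs : ‖c‖ = (c.natAbs : ℝ) := by
    rw [Int.norm_eq_abs, Nat.cast_natAbs, Int.cast_abs]
  unfold repList
  split_ifs with h
  · rw [List.length_flatten, List.map_replicate, List.sum_replicate, smul_eq_mul, habs]
    have h2 : c.toNat * lp.length ≤ c.natAbs * M := by
      have h3 : c.toNat = c.natAbs := by omega
      rw [h3]; exact Nat.mul_le_mul_left _ hp
    calc ((c.toNat * lp.length : ℕ) : ℝ) ≤ ((c.natAbs * M : ℕ) : ℝ) := by exact_mod_cast h2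
      _ = (c.natAbs : ℝ) * M := by push_cast; ring
  · rw [List.length_flatten, List.map_replicate, List.sum_replicate, smul_eq_mul, habs]
    have h2 : (-c).toNat * ln.length ≤ c.natAbs * M := by
      have h3 : (-c).toNat = c.natAbs := by omega
      rw [h3]; exact Nat.mul_le_mul_left _ hn
    calc (((-c).toNat * ln.length : ℕ) : ℝ) ≤ ((c.natAbs * M : ℕ) : ℝ) := by exact_mod_cast h2
      _ = (c.natAbs : ℝ) * M := by push_cast; ring

lemma list_sum_nonpos {l : List ℤ} (h : ∀ x ∈ l, x ≤ 0) : l.sum ≤ 0 := by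
  induction l with
  | nil => simp
  | cons a t ih =>
      simp only [List.sum_cons]
      have h1 := h a List.mem_cons_self
      have h2 := ih fun x hx => h x (List.mem_cons_of_mem a hx)
      omega

end Aux

/-- The random walk on `ℤ^{k}×ℤ` killed when leaving the half-space
`ℤ^{k}×ℕ*` satisfies the communication condition inside the half-space: any two distinct
points of the half-space are joined by a path staying in the half-space, of length at most
`C·|z'−z|`, with steps of norm at most `C` and probability at least `θ`; moreover the path
can be chosen so that all steps with nonnegative last coordinate come first, followed by
the steps with nonpositive last coordinate. -/
theorem communication_condition_killed_walk (k : ℕ)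
    (μ : ((Fin k → ℤ) × ℤ) → ℝ) (hμ0 : ∀ z, 0 ≤ μ z) (hμ1 : ∑' z, μ z = 1)
    (hirr : ∀ z : (Fin k → ℤ) × ℤ,
      ∃ l : List ((Fin k → ℤ) × ℤ), (∀ u ∈ l, 0 < μ u) ∧ l.sum = z) :
    ∃ θ > (0 : ℝ), ∃ C > (0 : ℝ), ∀ z z' : (Fin k → ℤ) × ℤ,
      1 ≤ z.2 → 1 ≤ z'.2 → z ≠ z' →
      ∃ n : ℕ, ∃ path : Fin (n + 1) → (Fin k → ℤ) × ℤ,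
        path 0 = z ∧ path (Fin.last n) = z' ∧ (n : ℝ) ≤ C * ‖z' - z‖ ∧
        (∀ j : Fin (n + 1), 1 ≤ (path j).2) ∧
        (∀ i : Fin n, ‖path i.succ - path i.castSucc‖ ≤ C ∧
          θ ≤ μ (path i.succ - path i.castSucc)) ∧
        ∃ m : ℕ, ∀ i : Fin n,
          ((i : ℕ) < m → 0 ≤ (path i.succ - path i.castSucc).2) ∧
          (m ≤ (i : ℕ) → (path i.succ - path i.castSucc).2 ≤ 0) := by
  classical
  choose L hLpos hLsum using hirr
  -- basis vectors
  set e : Fin k → ((Fin k → ℤ) × ℤ) := fun i => (Pi.single i 1, 0) with he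
  set u : ((Fin k → ℤ) × ℤ) := (0, 1) with hu
  set A : Fin k → List ((Fin k → ℤ) × ℤ) := fun i => L (e i) with hA
  set A' : Fin k → List ((Fin k → ℤ) × ℤ) := fun i => L (-(e i)) with hA'
  set Bp : List ((Fin k → ℤ) × ℤ) := L u with hBp
  set Bn : List ((Fin k → ℤ) × ℤ) := L (-u) with hBn
  -- the pool of all possible steps
  set B : List ((Fin k → ℤ) × ℤ) :=
    (List.ofFn fun i => A i ++ A' i).flatten ++ (Bp ++ Bn) with hB
  have hBposμ : ∀ x ∈ B, 0 < μ x := by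
    intro x hx
    rw [hB, List.mem_append, List.mem_flatten] at hx
    rcases hx with ⟨l, hl, hxl⟩ | hx
    · rw [List.mem_ofFn] at hl
      obtain ⟨i, rfl⟩ := hl
      rcases List.mem_append.1 hxl with h | h
      · exact hLpos _ _ h
      · exact hLpos _ _ h
    · rcases List.mem_append.1 hx with h | h
      · exact hLpos _ _ h
      · exact hLpos _ _ h
  -- steps list for a displacement w
  set S : ((Fin k → ℤ) × ℤ) → List ((Fin k → ℤ) × ℤ) := fun w =>
    (List.ofFn fun i => repList (w.1 i) (A i) (A' i)).flatten ++ repList w.2 Bp Bn with hS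
  have hSsum : ∀ w : ((Fin k → ℤ) × ℤ), (S w).sum = w := by
    intro w
    rw [hS]
    simp only
    rw [List.sum_append, List.sum_flatten, List.map_ofFn, List.sum_ofFn]
    have h1 : ∀ i : Fin k, (List.sum ∘ fun i => repList (w.1 i) (A i) (A' i)) i
        = (w.1 i) • (e i) := by
      intro i
      exact repList_sum _ (hLsum _) (by rw [hLsum])
    rw [Finset.sum_congr rfl fun i _ => h1 i, repList_sum _ (hLsum _) (by rw [hLsum])]
    have h2 : ∀ i : Fin k, (w.1 i) • (e i)
        = ((Pi.single i (w.1 i) : Fin k → ℤ), (0:ℤ)) := by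
      intro i
      rw [he]
      simp only
      rw [Prod.smul_mk, smul_zero]
      congr 1
      rw [← Pi.single_smul, smul_eq_mul, mul_one]
    have h3 : (w.2) • u = ((0 : Fin k → ℤ), w.2) := by
      rw [hu, Prod.smul_mk, smul_zero, smul_eq_mul, mul_one]
    rw [Finset.sum_congr rfl fun i _ => h2 i, h3]
    apply Prod.ext
    · rw [Prod.fst_add, Prod.fst_sum]
      simp [Finset.univ_sum_single]
    · rw [Prod.snd_add, Prod.snd_sum]
      simp
  have hSmem : ∀ w : ((Fin k → ℤ) × ℤ), ∀ x ∈ S w, x ∈ B := by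
    intro w x hx
    rw [hS] at hx
    rcases List.mem_append.1 hx with hx | hx
    · obtain ⟨l, hl, hxl⟩ := List.mem_flatten.1 hx
      rw [List.mem_ofFn] at hl
      obtain ⟨i, rfl⟩ := hl
      rcases repList_mem hxl with h | h <;>
      · rw [hB]
        refine List.mem_append_left _ (List.mem_flatten.2 ⟨A i ++ A' i, ?_, ?_⟩)
        · rw [List.mem_ofFn]; exact ⟨i, rfl⟩
        · simp [h]
    · rcases repList_mem hx with h | h <;>
      · rw [hB]
        exact List.mem_append_right _ (by simp [h])
  -- constants
  have h1B : (1:ℝ) ∈ insert (1:ℝ) (B.toFinset.image μ) := Finset.mem_insert_self _ _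
  set θ : ℝ := (insert (1:ℝ) (B.toFinset.image μ)).min' ⟨1, h1B⟩ with hθ
  have hθpos : 0 < θ := by
    have hmm := Finset.min'_mem (insert (1:ℝ) (B.toFinset.image μ)) ⟨1, h1B⟩
    rw [← hθ, Finset.mem_insert] at hmm
    rcases hmm with h | h
    · rw [h]; norm_num
    · obtain ⟨x, hx, hμx⟩ := Finset.mem_image.1 h
      rw [← hμx]
      exact hBposμ x (List.mem_toFinset.1 hx)
  have hθle : ∀ x ∈ B, θ ≤ μ x := by
    intro x hx
    exact Finset.min'_le _ _ (Finset.mem_insert_of_mem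
      (Finset.mem_image.2 ⟨x, List.mem_toFinset.2 hx, rfl⟩))
  set C₀ : ℝ := (insert (1:ℝ) (B.toFinset.image fun x => ‖x‖)).max'
    ⟨1, Finset.mem_insert_self _ _⟩ with hC₀
  have hC₀1 : (1:ℝ) ≤ C₀ := Finset.le_max' _ _ (Finset.mem_insert_self _ _)
  have hC₀le : ∀ x ∈ B, ‖x‖ ≤ C₀ := by
    intro x hx
    exact Finset.le_max' _ _ (Finset.mem_insert_of_mem
      (Finset.mem_image.2 ⟨x, List.mem_toFinset.2 hx, rfl⟩))
  set M : ℕ := B.length with hM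
  have hlenA : ∀ i : Fin k, (A i).length ≤ M ∧ (A' i).length ≤ M := by
    intro i
    have h1 : A i ++ A' i ∈ List.ofFn fun i => A i ++ A' i := by
      rw [List.mem_ofFn]; exact ⟨i, rfl⟩
    have h2 : (A i ++ A' i).length ≤ (List.ofFn fun i => A i ++ A' i).flatten.length := by
      rw [List.length_flatten]
      exact List.single_le_sum (by simp) _ (List.mem_map_of_mem h1)
    rw [hM, hB, List.length_append]
    constructor <;>
      simp only [List.length_append] at h2 ⊢ <;> omega
  have hlenBp : Bp.length ≤ M ∧ Bn.length ≤ M := by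
    rw [hM, hB]
    simp only [List.length_append]
    omega
  -- length bound of S w
  have hSlen : ∀ w : ((Fin k → ℤ) × ℤ), ((S w).length : ℝ) ≤ (M * (k+1) : ℝ) * ‖w‖ := by
    intro w
    have hb1 : ∀ i : Fin k, ((repList (w.1 i) (A i) (A' i)).length : ℝ) ≤ ‖w‖ * M := by
      intro i
      refine (repList_length (c := w.1 i) (hlenA i).1 (hlenA i).2).trans ?_
      have h1 : ‖w.1 i‖ ≤ ‖w‖ := (norm_le_pi_norm w.1 i).trans (norm_fst_le w)
      exact mul_le_mul_of_nonneg_right h1 (Nat.cast_nonneg _)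
    have hb2 : ((repList w.2 Bp Bn).length : ℝ) ≤ ‖w‖ * M := by
      refine (repList_length (c := w.2) hlenBp.1 hlenBp.2).trans ?_
      exact mul_le_mul_of_nonneg_right (norm_snd_le w) (Nat.cast_nonneg _)
    have hlen : (S w).length
        = (∑ i : Fin k, (repList (w.1 i) (A i) (A' i)).length)
          + (repList w.2 Bp Bn).length := by
      rw [hS]
      simp [List.length_append, List.length_flatten, List.map_ofFn, List.sum_ofFn,
        Function.comp]
    rw [hlen]
    push_cast
    calc (∑ i : Fin k, ((repList (w.1 i) (A i) (A' i)).length : ℝ))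
          + ((repList w.2 Bp Bn).length : ℝ)
        ≤ (∑ _i : Fin k, ‖w‖ * M) + ‖w‖ * M :=
          add_le_add (Finset.sum_le_sum fun i _ => hb1 i) hb2
      _ = (M * (k+1) : ℝ) * ‖w‖ := by
          rw [Finset.sum_const, Finset.card_univ, Fintype.card_fin, nsmul_eq_mul]
          ring
  set C : ℝ := max C₀ ((M * (k+1) : ℕ) : ℝ) with hC
  have hCpos : (0:ℝ) < C := lt_of_lt_of_le one_pos (le_trans hC₀1 (le_max_left _ _))
  refine ⟨θ, hθpos, C, hCpos, ?_⟩
  intro z z' hz hz' hne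
  set w : ((Fin k → ℤ) × ℤ) := z' - z with hw
  -- partition steps: nonneg last coordinate first
  set p : ((Fin k → ℤ) × ℤ) → Bool := fun x => decide (0 ≤ x.2) with hp
  set P : List ((Fin k → ℤ) × ℤ) := (S w).filter p with hP
  set N : List ((Fin k → ℤ) × ℤ) := (S w).filter (fun x => !p x) with hN
  set T : List ((Fin k → ℤ) × ℤ) := P ++ N with hT
  have hperm : T.Perm (S w) := List.filter_append_perm p (S w)
  have hTsum : T.sum = w := by rw [hperm.sum_eq, hSsum]
  have hTmem : ∀ x ∈ T, x ∈ B := fun x hx => hSmem w x (hperm.mem_iff.1 hx)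
  have hPmem : ∀ x ∈ P, 0 ≤ x.2 := by
    intro x hx
    have h1 := (List.mem_filter.1 hx).2
    rw [hp] at h1
    exact of_decide_eq_true h1
  have hNmem : ∀ x ∈ N, x.2 ≤ 0 := by
    intro x hx
    have h1 := (List.mem_filter.1 hx).2
    rw [hp] at h1
    simp only [Bool.not_eq_true', decide_eq_false_iff_not, not_le] at h1
    omega
  set n : ℕ := T.length with hn
  set m : ℕ := P.length with hm
  have hTlen : n = m + N.length := by rw [hn, hm, hT, List.length_append]
  set path : Fin (n+1) → ((Fin k → ℤ) × ℤ) := fun j => z + (T.take j).sum with hpath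
  have hpath0 : path 0 = z := by simp [hpath]
  have hpathlast : path (Fin.last n) = z' := by
    simp only [hpath, Fin.val_last]
    rw [List.take_of_length_le (le_of_eq hn.symm), hTsum, hw]
    abel
  -- second coordinates of partial sums
  have hsnd : ∀ (l : List ((Fin k → ℤ) × ℤ)), (l.sum).2 = (l.map Prod.snd).sum := by
    intro l
    induction l with
    | nil => simp
    | cons a t ih => simp [ih]
  have hpos : ∀ j : Fin (n+1), 1 ≤ (path j).2 := by
    intro j
    rcases le_or_gt (j : ℕ) m with hjm | hjm
    · -- ascending phase
      have htake : T.take j = P.take j := by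
        rw [hT]
        exact List.take_append_of_le_length (by omega)
      have h1 : 0 ≤ ((T.take (j:ℕ)).sum).2 := by
        rw [hsnd]
        apply List.sum_nonneg
        intro x hx
        obtain ⟨y, hy, rfl⟩ := List.mem_map.1 hx
        rw [htake] at hy
        exact hPmem y (List.take_subset _ _ hy)
      have h2 : (path j).2 = z.2 + ((T.take (j:ℕ)).sum).2 := by simp [hpath]
      omega
    · -- descending phase : path j = z' - (T.drop j).sum
      have hsplit : (T.take (j:ℕ)).sum = w - (T.drop (j:ℕ)).sum := by
        have h0 := List.take_append_drop (j : ℕ) T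
        have h2 : (T.take (j:ℕ)).sum + (T.drop (j:ℕ)).sum = T.sum := by
          rw [← List.sum_append, h0]
        rw [hTsum] at h2
        linear_combination h2
      have hdropmem : ∀ x ∈ T.drop (j:ℕ), x ∈ N := by
        intro x hx
        have h1 : T.drop (j:ℕ) = (T.drop m).drop ((j:ℕ) - m) := by
          rw [List.drop_drop]
          congr 1
          omega
        have h2 : T.drop m = N := by
          rw [hT, hm, List.drop_left]
        rw [h1, h2] at hx
        exact List.drop_subset _ _ hx
      have hd : ((T.drop (j:ℕ)).sum).2 ≤ 0 := by
        rw [hsnd]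
        apply list_sum_nonpos
        intro x hx
        obtain ⟨y, hy, rfl⟩ := List.mem_map.1 hx
        exact hNmem y (hdropmem y hy)
      have h3 : (path j).2 = z'.2 - ((T.drop (j:ℕ)).sum).2 := by
        simp only [hpath, hsplit, hw]
        simp [Prod.sub_def]
        ring
      omega
  -- steps
  have hstep : ∀ i : Fin n, path i.succ - path i.castSucc
      = T[(i:ℕ)]'(by rw [← hn]; exact i.2) := by
    intro i
    simp only [hpath, Fin.val_succ, Fin.coe_castSucc]
    rw [List.sum_take_succ T i (by rw [← hn]; exact i.2)]
    abel
  refine ⟨n, path, hpath0, hpathlast, ?_, hpos, ?_, m, ?_⟩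
  · -- length bound
    have h1 : (n : ℝ) = ((S w).length : ℝ) := by
      rw [hn, hperm.length_eq]
    rw [h1]
    refine (hSlen w).trans ?_
    have hnorm : (0:ℝ) ≤ ‖w‖ := norm_nonneg _
    have h2 : ((M * (k+1) : ℕ) : ℝ) ≤ C := le_max_right _ _
    push_cast at h2
    calc (M * (k+1) : ℝ) * ‖w‖ ≤ C * ‖w‖ := by
          apply mul_le_mul_of_nonneg_right _ hnorm
          push_cast
          exact h2
      _ = C * ‖z' - z‖ := by rw [hw]
  · intro i
    rw [hstep i]
    have hmem : T[(i:ℕ)]'(by rw [← hn]; exact i.2) ∈ T := List.getElem_mem _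
    have hmemB := hTmem _ hmem
    exact ⟨(hC₀le _ hmemB).trans (le_max_left _ _), hθle _ hmemB⟩
  · intro i
    have hilt : (i:ℕ) < T.length := by rw [← hn]; exact i.2
    constructor
    · intro him
      rw [hstep i]
      have hiP : (i:ℕ) < P.length := by omega
      have h1 : T[(i:ℕ)]'hilt = P[(i:ℕ)]'hiP := List.getElem_append_left hiP
      rw [h1]
      exact hPmem _ (List.getElem_mem _)
    · intro him
      rw [hstep i]
      have hiN : (i:ℕ) - m < N.length := by
        have := i.2
        omega
      have h1 : T[(i:ℕ)]'hilt = N[(i:ℕ) - P.length]'(by omega) :=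
        List.getElem_append_right (by omega)
      rw [h1]
      exact hNmem _ (List.getElem_mem _)
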